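/- Let 0 < s < 1 and let mu be a Radon measure on R^d. Let B be a ball with t-thin boundary and radius r, and let a : R^d -> R^d be a bounded measurable vector-valued function supported on 2B \ B. Then for all x in B, int_{2B \ B} |a(y)| / |y - x|^s dmu(y) <= C(s, d, t) * ||a||_infty * theta(2B), where theta(2B) = mu(2B)/(2r)^s. The same bound holds with the roles reversed: if a is supported on B, then int_B |a(y)|/|y-x|^s dmu(y) <= C ||a||_infty theta(2B) for all x in 2B \ B. -/

import Mathlib

open MeasureTheory Metric

/-- A ball `B(x₀,r)` has `t`-thin boundary for `μ`. -/
def HasThinBoundary {d : ℕ} (μ : Measure (EuclideanSpace ℝ (Fin d))) (t : ℝ)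
    (x₀ : EuclideanSpace ℝ (Fin d)) (r : ℝ) : Prop :=
  ∀ lam : ℝ, 0 < lam →
    μ {y ∈ ball x₀ (2 * r) | infDist y (sphere x₀ r) ≤ lam * r}
      ≤ ENNReal.ofReal (t * lam) * μ (ball x₀ (2 * r))

/-- The average `s`-dimensional density `θ(B(x,r)) = μ(B(x,r))/r^s`. -/
noncomputable def thetaB {d : ℕ} (μ : Measure (EuclideanSpace ℝ (Fin d))) (s : ℝ)
    (x : EuclideanSpace ℝ (Fin d)) (r : ℝ) : ℝ :=
  (μ (ball x r)).toReal / r ^ s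

lemma infDist_sphere_le_abs {E : Type*} [NormedAddCommGroup E] [NormedSpace ℝ E]
    (x₀ y : E) (r : ℝ) (hr : 0 ≤ r) :
    infDist y (sphere x₀ r) ≤ |dist y x₀ - r| := by
  rcases eq_or_ne y x₀ with rfl | hne
  · rcases (sphere y r).eq_empty_or_nonempty with he | ⟨z, hz⟩
    · rw [he, infDist_empty]
      positivity
    · refine le_trans (infDist_le_dist_of_mem hz) ?_
      rw [mem_sphere] at hz
      rw [dist_comm, hz]
      simp [abs_of_nonneg hr]
  · have hn0 : (0:ℝ) < ‖y - x₀‖ := by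
      rw [norm_pos_iff]
      exact sub_ne_zero.mpr hne
    set n : ℝ := ‖y - x₀‖ with hn
    set z : E := x₀ + (r * n⁻¹) • (y - x₀) with hz
    have hzmem : z ∈ sphere x₀ r := by
      simp only [mem_sphere, hz, dist_eq_norm, add_sub_cancel_left, norm_smul,
        Real.norm_eq_abs, abs_mul]
      rw [abs_of_nonneg hr, abs_of_nonneg (inv_nonneg.2 hn0.le)]
      field_simp
      rfl
    have hyz : y - z = (1 - r * n⁻¹) • (y - x₀) := by
      rw [hz]
      module
    have hmul : (1 - r * n⁻¹) * n = n - r := by field_simp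
    have hd : dist y z = |n - r| := by
      calc dist y z = ‖(1 - r * n⁻¹) • (y - x₀)‖ := by rw [dist_eq_norm, hyz]
        _ = |1 - r * n⁻¹| * n := by rw [norm_smul, Real.norm_eq_abs]
        _ = |1 - r * n⁻¹| * |n| := by rw [abs_of_nonneg hn0.le]
        _ = |(1 - r * n⁻¹) * n| := (abs_mul _ _).symm
        _ = |n - r| := by rw [hmul]
    have : dist y x₀ = n := by rw [dist_eq_norm]
    rw [this]
    exact hd ▸ infDist_le_dist_of_mem hzmem

lemma annuli_bound {d : ℕ} {s t : ℝ} (hs : 0 < s) (hs1 : s < 1) (ht : 0 < t)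
    (μ : Measure (EuclideanSpace ℝ (Fin d))) [IsLocallyFiniteMeasure μ]
    (x₀ : EuclideanSpace ℝ (Fin d)) (r : ℝ) (hr : 0 < r)
    (hthin : HasThinBoundary μ t x₀ r)
    (a : EuclideanSpace ℝ (Fin d) → EuclideanSpace ℝ (Fin d)) (M : ℝ)
    (hM : ∀ y, ‖a y‖ ≤ M) (x : EuclideanSpace ℝ (Fin d))
    (D : Set (EuclideanSpace ℝ (Fin d))) (hDm : MeasurableSet D)
    (hD2B : D ⊆ ball x₀ (2*r))
    (hinf : ∀ y ∈ D, infDist y (sphere x₀ r) ≤ dist y x)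
    (hposd : ∀ y ∈ D, 0 < dist y x) (hlt : ∀ y ∈ D, dist y x < 3*r) :
    ∫⁻ y in D, ENNReal.ofReal (‖a y‖ / dist y x ^ s) ∂μ
      ≤ ENNReal.ofReal ((3*t*(4/3)^s * (1 - (2:ℝ)^(s-1))⁻¹) * M * thetaB μ s x₀ (2*r)) := by
  have hM0 : 0 ≤ M := le_trans (norm_nonneg _) (hM x)
  set q : ℝ := (2:ℝ)^(s-1) with hqdef
  have hq0 : 0 < q := Real.rpow_pos_of_pos (by norm_num) _
  have hq1 : q < 1 := Real.rpow_lt_one_of_one_lt_of_neg (by norm_num) (by linarith)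
  -- annuli
  set A : ℕ → Set (EuclideanSpace ℝ (Fin d)) :=
    fun k => {y | 3*r*(2⁻¹:ℝ)^k/2 < dist y x ∧ dist y x ≤ 3*r*(2⁻¹:ℝ)^k} with hA
  have hAm : ∀ k, MeasurableSet (A k) := by
    intro k
    have hc : Continuous fun y : EuclideanSpace ℝ (Fin d) => dist y x :=
      Continuous.dist continuous_id continuous_const
    exact ((isOpen_lt continuous_const hc).measurableSet).inter
      ((isClosed_le hc continuous_const).measurableSet)
  have hcover : D ⊆ ⋃ k, D ∩ A k := by
    intro y hy
    have hd0 := hposd y hy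
    have hd3 := hlt y hy
    have hex : ∃ k : ℕ, 3*r*(2⁻¹:ℝ)^k/2 < dist y x := by
      obtain ⟨k, hk⟩ := exists_pow_lt_of_lt_one
        (show (0:ℝ) < 2 * dist y x / (3*r) by positivity)
        (show (2⁻¹:ℝ) < 1 by norm_num)
      refine ⟨k, ?_⟩
      rw [lt_div_iff₀ (by positivity : (0:ℝ) < 3*r)] at hk
      linarith
    classical
    set k₀ := Nat.find hex with hk₀
    refine Set.mem_iUnion.2 ⟨k₀, hy, Nat.find_spec hex, ?_⟩
    rcases Nat.eq_zero_or_pos k₀ with h0 | hposk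
    · rw [h0]; simpa using hd3.le
    · obtain ⟨m, hm⟩ := Nat.exists_eq_succ_of_ne_zero hposk.ne'
      have := Nat.find_min hex (by omega : m < k₀)
      push_neg at this
      calc dist y x ≤ 3*r*(2⁻¹:ℝ)^m/2 := this
        _ = 3*r*(2⁻¹:ℝ)^(m+1) := by ring
        _ = 3*r*(2⁻¹:ℝ)^k₀ := by rw [hm]
  have hfin : μ (ball x₀ (2*r)) ≠ ⊤ := measure_ball_lt_top.ne
  set c0 : ℝ := 3*t*M/(3*r/2)^s with hc0
  have hc00 : 0 ≤ c0 := by positivity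
  -- per annulus bound
  have hannulus : ∀ k : ℕ, ∫⁻ y in D ∩ A k, ENNReal.ofReal (‖a y‖ / dist y x ^ s) ∂μ
      ≤ ENNReal.ofReal (c0 * q^k) * μ (ball x₀ (2*r)) := by
    intro k
    set ρ : ℝ := 3*r*(2⁻¹:ℝ)^k/2 with hρ
    have hρ0 : 0 < ρ := by positivity
    have hstep1 : ∫⁻ y in D ∩ A k, ENNReal.ofReal (‖a y‖ / dist y x ^ s) ∂μ
        ≤ ENNReal.ofReal (M / ρ^s) * μ (D ∩ A k) := by
      calc ∫⁻ y in D ∩ A k, ENNReal.ofReal (‖a y‖ / dist y x ^ s) ∂μ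
          ≤ ∫⁻ _ in D ∩ A k, ENNReal.ofReal (M / ρ^s) ∂μ := by
            refine setLIntegral_mono' (hDm.inter (hAm k)) (fun y hy => ?_)
            refine ENNReal.ofReal_le_ofReal ?_
            have h1 : ρ < dist y x := hy.2.1
            have h2 : ρ^s ≤ dist y x ^ s :=
              Real.rpow_le_rpow hρ0.le h1.le hs.le
            exact div_le_div₀ hM0 (hM y) (Real.rpow_pos_of_pos hρ0 s) h2
        _ = ENNReal.ofReal (M / ρ^s) * μ (D ∩ A k) := setLIntegral_const _ _
    have hmeas : μ (D ∩ A k) ≤ ENNReal.ofReal (t * (3*(2⁻¹:ℝ)^k)) * μ (ball x₀ (2*r)) := by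
      refine le_trans (measure_mono ?_) (hthin (3*(2⁻¹:ℝ)^k) (by positivity))
      intro y hy
      refine ⟨hD2B hy.1, ?_⟩
      calc infDist y (sphere x₀ r) ≤ dist y x := hinf y hy.1
        _ ≤ 3*r*(2⁻¹:ℝ)^k := hy.2.2
        _ = 3*(2⁻¹:ℝ)^k * r := by ring
    have hkey : M / ρ^s * (t * (3*(2⁻¹:ℝ)^k)) = c0 * q^k := by
      set u : ℝ := (2⁻¹:ℝ)^k with hu
      have hu0 : (0:ℝ) < u := by positivity
      have hρs : ρ^s = (3*r/2)^s * u^s := by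
        rw [hρ, show 3*r*(2⁻¹:ℝ)^k/2 = (3*r/2) * (2⁻¹:ℝ)^k by ring, ← hu,
          Real.mul_rpow (by positivity) hu0.le]
      have hus : u / u^s = u^(1-s) := by
        rw [Real.rpow_sub hu0, Real.rpow_one]
      have hq' : (2⁻¹:ℝ)^(1-s) = q := by
        rw [hqdef, Real.inv_rpow (by norm_num : (0:ℝ) ≤ 2),
          ← Real.rpow_neg (by norm_num : (0:ℝ) ≤ 2)]
        congr 1
        ring
      have hqk : u^(1-s) = q^k := by
        rw [hu, ← Real.rpow_natCast (2⁻¹:ℝ) k,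
          ← Real.rpow_mul (by norm_num : (0:ℝ) ≤ 2⁻¹), mul_comm,
          Real.rpow_mul (by norm_num : (0:ℝ) ≤ 2⁻¹), Real.rpow_natCast, hq']
      have h1 : (0:ℝ) < (3*r/2)^s := Real.rpow_pos_of_pos (by positivity) s
      have hus' : (0:ℝ) < u^s := Real.rpow_pos_of_pos hu0 s
      have e1 : M / ρ^s * (t * (3*u)) = c0 * (u / u^s) := by
        rw [hρs, hc0]
        field_simp
      rw [e1, hus, hqk]
    calc ∫⁻ y in D ∩ A k, ENNReal.ofReal (‖a y‖ / dist y x ^ s) ∂μ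
        ≤ ENNReal.ofReal (M / ρ^s) * μ (D ∩ A k) := hstep1
      _ ≤ ENNReal.ofReal (M / ρ^s) * (ENNReal.ofReal (t * (3*(2⁻¹:ℝ)^k)) * μ (ball x₀ (2*r))) :=
          mul_le_mul_right hmeas _
      _ = ENNReal.ofReal (M / ρ^s * (t * (3*(2⁻¹:ℝ)^k))) * μ (ball x₀ (2*r)) := by
          rw [← mul_assoc, ← ENNReal.ofReal_mul (by positivity)]
      _ = ENNReal.ofReal (c0 * q^k) * μ (ball x₀ (2*r)) := by rw [hkey]
  -- sum up
  calc ∫⁻ y in D, ENNReal.ofReal (‖a y‖ / dist y x ^ s) ∂μ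
      ≤ ∫⁻ y in ⋃ k, D ∩ A k, ENNReal.ofReal (‖a y‖ / dist y x ^ s) ∂μ :=
        lintegral_mono_set hcover
    _ ≤ ∑' k, ∫⁻ y in D ∩ A k, ENNReal.ofReal (‖a y‖ / dist y x ^ s) ∂μ :=
        lintegral_iUnion_le _ _
    _ ≤ ∑' k, ENNReal.ofReal (c0 * q^k) * μ (ball x₀ (2*r)) :=
        ENNReal.tsum_le_tsum hannulus
    _ = ENNReal.ofReal c0 * (∑' k : ℕ, (ENNReal.ofReal q)^k) * μ (ball x₀ (2*r)) := by
        rw [ENNReal.tsum_mul_right, ← ENNReal.tsum_mul_left]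
        congr 1
        congr 1
        funext k
        rw [ENNReal.ofReal_mul hc00, ENNReal.ofReal_pow hq0.le]
    _ = ENNReal.ofReal c0 * ENNReal.ofReal ((1-q)⁻¹) * μ (ball x₀ (2*r)) := by
        rw [ENNReal.tsum_geometric, ENNReal.ofReal_inv_of_pos (by linarith : (0:ℝ) < 1-q),
          ENNReal.ofReal_sub 1 hq0.le, ENNReal.ofReal_one]
    _ = ENNReal.ofReal (c0 * (1-q)⁻¹ * (μ (ball x₀ (2*r))).toReal) := by
        rw [← ENNReal.ofReal_mul hc00, ← ENNReal.ofReal_toReal hfin,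
          ← ENNReal.ofReal_mul
            (mul_nonneg hc00 (inv_nonneg.2 (by linarith : (0:ℝ) ≤ 1-q)))]
        rw [ENNReal.ofReal_toReal hfin]
    _ ≤ ENNReal.ofReal ((3*t*(4/3)^s * (1 - (2:ℝ)^(s-1))⁻¹) * M * thetaB μ s x₀ (2*r)) := by
        refine ENNReal.ofReal_le_ofReal (le_of_eq ?_)
        rw [thetaB]
        have h43 : (4/3:ℝ)^s * (3*r/2)^s = (2*r)^s := by
          rw [← Real.mul_rpow (by norm_num) (by positivity)]
          congr 1
          ring
        have h1 : (0:ℝ) < (3*r/2)^s := Real.rpow_pos_of_pos (by positivity) s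
        have h40 : (0:ℝ) < (4/3:ℝ)^s := Real.rpow_pos_of_pos (by norm_num) s
        have h1q : (0:ℝ) < 1 - q := by linarith
        rw [hc0, ← hqdef, ← h43]
        field_simp

/-- If `B` has `t`-thin boundary and `a` is a bounded vector-valued function supported on
`2B \ B`, then `∫_{2B\B} |a(y)|/|y-x|^s dμ(y) ≤ C(s,d,t) ‖a‖_∞ θ(2B)` for all `x ∈ B`;
symmetrically, for `a` supported on `B`, `∫_B |a(y)|/|y-x|^s dμ(y) ≤ C ‖a‖_∞ θ(2B)` for all
`x ∈ 2B \ B`. -/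
theorem stmt15 (d : ℕ) (s t : ℝ) (hs : 0 < s) (hs1 : s < 1) (ht : 0 < t) :
    ∃ C : ℝ, 0 < C ∧
      ∀ μ : Measure (EuclideanSpace ℝ (Fin d)), IsLocallyFiniteMeasure μ →
        ∀ (x₀ : EuclideanSpace ℝ (Fin d)) (r : ℝ), 0 < r →
          HasThinBoundary μ t x₀ r →
          ∀ (a : EuclideanSpace ℝ (Fin d) → EuclideanSpace ℝ (Fin d)) (M : ℝ),
            (∀ y, ‖a y‖ ≤ M) →
            ((∀ y ∉ ball x₀ (2 * r) \ ball x₀ r, a y = 0) →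
              ∀ x ∈ ball x₀ r,
                ∫⁻ y in ball x₀ (2 * r) \ ball x₀ r,
                    ENNReal.ofReal (‖a y‖ / dist y x ^ s) ∂μ
                  ≤ ENNReal.ofReal (C * M * thetaB μ s x₀ (2 * r))) ∧
            ((∀ y ∉ ball x₀ r, a y = 0) →
              ∀ x ∈ ball x₀ (2 * r) \ ball x₀ r,
                ∫⁻ y in ball x₀ r, ENNReal.ofReal (‖a y‖ / dist y x ^ s) ∂μ
                  ≤ ENNReal.ofReal (C * M * thetaB μ s x₀ (2 * r))) := by
  have hq0 : (0:ℝ) < (2:ℝ)^(s-1) := Real.rpow_pos_of_pos (by norm_num) _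
  have hq1 : (2:ℝ)^(s-1) < 1 := Real.rpow_lt_one_of_one_lt_of_neg (by norm_num) (by linarith)
  refine ⟨3*t*(4/3:ℝ)^s * (1 - (2:ℝ)^(s-1))⁻¹, ?_, ?_⟩
  · have h43 : (0:ℝ) < (4/3:ℝ)^s := Real.rpow_pos_of_pos (by norm_num) s
    have : (0:ℝ) < (1 - (2:ℝ)^(s-1))⁻¹ := inv_pos.2 (by linarith)
    positivity
  intro μ hloc x₀ r hr hthin a M hM
  haveI := hloc
  constructor
  · intro _ x hx
    refine annuli_bound hs hs1 ht μ x₀ r hr hthin a M hM x _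
      ((measurableSet_ball).diff measurableSet_ball) (fun y hy => hy.1) ?_ ?_ ?_
    · intro y hy
      have h1 : r ≤ dist y x₀ := by
        by_contra h
        exact hy.2 (mem_ball.2 (lt_of_not_ge h))
      have h2 : dist x x₀ < r := mem_ball.1 hx
      refine le_trans (infDist_sphere_le_abs x₀ y r hr.le) ?_
      rw [abs_of_nonneg (by linarith)]
      have := dist_triangle y x x₀
      linarith
    · intro y hy
      have h1 : r ≤ dist y x₀ := by
        by_contra h
        exact hy.2 (mem_ball.2 (lt_of_not_ge h))
      have h2 : dist x x₀ < r := mem_ball.1 hx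
      have := dist_triangle y x x₀
      linarith
    · intro y hy
      have h1 : dist y x₀ < 2*r := mem_ball.1 hy.1
      have h2 : dist x x₀ < r := mem_ball.1 hx
      have := dist_triangle y x₀ x
      rw [dist_comm x₀ x] at this
      linarith
  · intro _ x hx
    refine annuli_bound hs hs1 ht μ x₀ r hr hthin a M hM x _
      measurableSet_ball (ball_subset_ball (by linarith)) ?_ ?_ ?_
    · intro y hy
      have h1 : dist y x₀ < r := mem_ball.1 hy
      have h2 : r ≤ dist x x₀ := by
        by_contra h
        exact hx.2 (mem_ball.2 (lt_of_not_ge h))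
      refine le_trans (infDist_sphere_le_abs x₀ y r hr.le) ?_
      rw [abs_of_nonpos (by linarith), neg_sub]
      have := dist_triangle x y x₀
      rw [dist_comm x y] at this
      linarith
    · intro y hy
      have h1 : dist y x₀ < r := mem_ball.1 hy
      have h2 : r ≤ dist x x₀ := by
        by_contra h
        exact hx.2 (mem_ball.2 (lt_of_not_ge h))
      have := dist_triangle x y x₀
      rw [dist_comm x y] at this
      linarith
    · intro y hy
      have h1 : dist y x₀ < r := mem_ball.1 hy
      have h2 : dist x x₀ < 2*r := mem_ball.1 hx.1
      have := dist_triangle y x₀ x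
      rw [dist_comm x₀ x] at this
      linarith
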